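/- Suppose in Lemma 1's setting: 0 < τ² < ∞, 0 < σ_η² < ∞, D̂ = Zγ̂ ≠ 0, and Λ_min(Z^T Z/n) > 0. Define A = (1/(nσ_η²)) Z^T P_{D̂} Z and B = (1/n)(Z^T Z/σ_η² + τ^{-2} I). Then the largest eigenvalue c* of AB^{-1} satisfies 0 < c* < 1. -/

import Mathlib

open Matrix

/-- The largest eigenvalue of a real matrix, as the supremum of its real spectrum. -/
noncomputable def lmax {J : ℕ} (M : Matrix (Fin J) (Fin J) ℝ) : ℝ :=
  sSup (spectrum ℝ M)

/-- The smallest eigenvalue of a real matrix, as the infimum of its real spectrum. -/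
noncomputable def lmin {J : ℕ} (M : Matrix (Fin J) (Fin J) ℝ) : ℝ :=
  sInf (spectrum ℝ M)

private lemma vecMulVec_mulVec' {n : ℕ} (D w : Fin n → ℝ) :
    vecMulVec D D *ᵥ w = (D ⬝ᵥ w) • D := by
  ext i
  simp only [mulVec, dotProduct, vecMulVec_apply, Pi.smul_apply, smul_eq_mul, Finset.sum_mul]
  exact Finset.sum_congr rfl fun j _ => by ring

private lemma dot_transpose {n J : ℕ} (Z : Matrix (Fin n) (Fin J) ℝ)
    (x : Fin J → ℝ) (y : Fin n → ℝ) : x ⬝ᵥ Zᵀ *ᵥ y = (Z *ᵥ x) ⬝ᵥ y := by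
  rw [dotProduct_mulVec, vecMul_transpose]

/-- spectrum of a real hermitian matrix equals range of its eigenvalues -/
private lemma spectrum_eq_range {J : ℕ} {S : Matrix (Fin J) (Fin J) ℝ}
    (hS : S.IsHermitian) : spectrum ℝ S = Set.range hS.eigenvalues := by
  have hmem := (Matrix.IsHermitian.eigenvectorUnitary hS).2
  rw [Unitary.mem_iff] at hmem
  let u : (Matrix (Fin J) (Fin J) ℝ)ˣ :=
    ⟨(Matrix.IsHermitian.eigenvectorUnitary hS : Matrix (Fin J) (Fin J) ℝ),
      star (Matrix.IsHermitian.eigenvectorUnitary hS : Matrix (Fin J) (Fin J) ℝ),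
      hmem.2, hmem.1⟩
  have h1 : S = (u : Matrix (Fin J) (Fin J) ℝ) * diagonal (RCLike.ofReal ∘ hS.eigenvalues) *
      ((u⁻¹ : (Matrix (Fin J) (Fin J) ℝ)ˣ) : Matrix (Fin J) (Fin J) ℝ) :=
    hS.spectral_theorem
  calc spectrum ℝ S
      = spectrum ℝ ((u : Matrix (Fin J) (Fin J) ℝ) * diagonal (RCLike.ofReal ∘ hS.eigenvalues) *
        ((u⁻¹ : (Matrix (Fin J) (Fin J) ℝ)ˣ) : Matrix (Fin J) (Fin J) ℝ)) := by
        conv_lhs => rw [h1]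
    _ = spectrum ℝ (diagonal (RCLike.ofReal ∘ hS.eigenvalues)) := spectrum.units_conjugate
    _ = Set.range hS.eigenvalues := by
        rw [show (RCLike.ofReal ∘ hS.eigenvalues : Fin J → ℝ) = hS.eigenvalues by
          funext i; simp [RCLike.ofReal_real_eq_id]]
        exact spectrum_diagonal _

open scoped MatrixOrder in
private lemma psd_sqrt_exists {J : ℕ} {B : Matrix (Fin J) (Fin J) ℝ} (h : B.PosSemidef) :
    ∃ R : Matrix (Fin J) (Fin J) ℝ, R.PosSemidef ∧ R * R = B :=
  ⟨CFC.sqrt B, (CFC.sqrt_nonneg B).posSemidef, CFC.sqrt_mul_sqrt_self B h.nonneg⟩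

theorem stmt_4 {n J : ℕ} (Z : Matrix (Fin n) (Fin J) ℝ) (γ : Fin J → ℝ)
    (τsq σsq : ℝ) (hτ : 0 < τsq) (hσ : 0 < σsq)
    (D : Fin n → ℝ) (hD : D = Z.mulVec γ) (hD0 : D ≠ 0)
    (hZ : 0 < lmin ((n : ℝ)⁻¹ • (Zᵀ * Z)))
    (P : Matrix (Fin n) (Fin n) ℝ) (hP : P = (D ⬝ᵥ D)⁻¹ • vecMulVec D D)
    (A B : Matrix (Fin J) (Fin J) ℝ)
    (hA : A = ((n : ℝ) * σsq)⁻¹ • (Zᵀ * P * Z))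
    (hB : B = (n : ℝ)⁻¹ • (σsq⁻¹ • (Zᵀ * Z) + τsq⁻¹ • (1 : Matrix (Fin J) (Fin J) ℝ)))
    (c : ℝ) (hc : c = lmax (A * B⁻¹)) :
    0 < c ∧ c < 1 := by
  classical
  -- n ≠ 0
  have hn0 : n ≠ 0 := by
    rintro rfl
    exact hD0 (funext fun i => i.elim0)
  have hn : (0 : ℝ) < n := by positivity
  -- J ≠ 0
  have hJ0 : J ≠ 0 := by
    rintro rfl
    have hsub : Subsingleton (Matrix (Fin 0) (Fin 0) ℝ) :=
      ⟨fun a b => by ext i; exact i.elim0⟩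
    have : spectrum ℝ ((n : ℝ)⁻¹ • (Zᵀ * Z)) = ∅ := by
      rw [Set.eq_empty_iff_forall_notMem]
      intro x hx
      exact (spectrum.mem_iff.mp hx) (@isUnit_of_subsingleton _ _ hsub _)
    rw [lmin, this, Real.sInf_empty] at hZ
    exact lt_irrefl 0 hZ
    
  haveI : Nonempty (Fin J) := ⟨⟨0, Nat.pos_of_ne_zero hJ0⟩⟩
  have hdd : 0 < D ⬝ᵥ D := by
    have := Matrix.dotProduct_star_self_pos_iff (v := D)
    simpa using this.mpr hD0
  have hstarJ : ∀ x : Fin J → ℝ, star x = x := fun x => funext fun i => rfl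
  -- quadratic forms
  have hq : ∀ x : Fin J → ℝ,
      x ⬝ᵥ (A *ᵥ x) = ((n : ℝ) * σsq)⁻¹ * ((D ⬝ᵥ D)⁻¹ * (D ⬝ᵥ (Z *ᵥ x)) ^ 2) := by
    intro x
    rw [hA, smul_mulVec, dotProduct_smul, smul_eq_mul]
    congr 1
    rw [← mulVec_mulVec, ← mulVec_mulVec, dot_transpose, hP, smul_mulVec,
      vecMulVec_mulVec', dotProduct_smul, smul_eq_mul, dotProduct_smul, smul_eq_mul]
    rw [dotProduct_comm (Z *ᵥ x) D]
    ring
  have hqB : ∀ x : Fin J → ℝ,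
      x ⬝ᵥ (B *ᵥ x) =
        (n : ℝ)⁻¹ * (σsq⁻¹ * ((Z *ᵥ x) ⬝ᵥ (Z *ᵥ x)) + τsq⁻¹ * (x ⬝ᵥ x)) := by
    intro x
    rw [hB, smul_mulVec, dotProduct_smul, smul_eq_mul]
    congr 1
    rw [add_mulVec, dotProduct_add, smul_mulVec, smul_mulVec, one_mulVec,
      dotProduct_smul, smul_eq_mul, dotProduct_smul, smul_eq_mul,
      ← mulVec_mulVec, dot_transpose]
  -- Hermitian-ness
  have hPsymm : Pᵀ = P := by
    rw [hP]; ext i j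
    simp [vecMulVec_apply, mul_comm]
  have hAherm : A.IsHermitian := by
    rw [Matrix.IsHermitian, conjTranspose_eq_transpose_of_trivial, hA, transpose_smul,
      transpose_mul, transpose_mul, transpose_transpose, hPsymm, Matrix.mul_assoc]
  have hBherm : B.IsHermitian := by
    rw [Matrix.IsHermitian, conjTranspose_eq_transpose_of_trivial, hB, transpose_smul,
      transpose_add, transpose_smul, transpose_smul, transpose_mul, transpose_transpose,
      transpose_one]
  -- positivity
  have hApsd : A.PosSemidef := by
    refine Matrix.PosSemidef.of_dotProduct_mulVec_nonneg hAherm fun x => ?_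
    rw [hstarJ, hq]
    have h1 : (0:ℝ) ≤ ((n : ℝ) * σsq)⁻¹ := by positivity
    have h2 : (0:ℝ) ≤ (D ⬝ᵥ D)⁻¹ := by positivity
    positivity
  have hxx : ∀ x : Fin J → ℝ, x ≠ 0 → 0 < x ⬝ᵥ x := by
    intro x hx
    have := Matrix.dotProduct_star_self_pos_iff (v := x)
    simpa [hstarJ] using this.mpr hx
  have hBpd : B.PosDef := by
    refine Matrix.PosDef.of_dotProduct_mulVec_pos hBherm fun x hx => ?_
    rw [hstarJ, hqB]
    have h1 : (0:ℝ) ≤ (Z *ᵥ x) ⬝ᵥ (Z *ᵥ x) := by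
      have := dotProduct_star_self_nonneg (Z *ᵥ x)
      simpa using this
    have h2 := hxx x hx
    have h3 : (0:ℝ) < (n:ℝ)⁻¹ := by positivity
    have h4 : (0:ℝ) < τsq⁻¹ := by positivity
    have h5 : (0:ℝ) ≤ σsq⁻¹ := by positivity
    nlinarith [mul_pos h3 (mul_pos h4 h2), mul_nonneg h3.le (mul_nonneg h5 h1)]
  have hBA : (B - A).PosDef := by
    refine Matrix.PosDef.of_dotProduct_mulVec_pos (hBherm.sub hAherm) fun x hx => ?_
    rw [hstarJ, sub_mulVec, dotProduct_sub, hq, hqB]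
    set v := Z *ᵥ x with hv
    have hcs : (D ⬝ᵥ v) ^ 2 ≤ (D ⬝ᵥ D) * (v ⬝ᵥ v) := by
      simpa [dotProduct, pow_two] using
        Finset.sum_mul_sq_le_sq_mul_sq Finset.univ D v
    have hkey : (D ⬝ᵥ D)⁻¹ * (D ⬝ᵥ v) ^ 2 ≤ v ⬝ᵥ v := by
      rw [inv_mul_le_iff₀ hdd]
      linarith [hcs]
    have h2 := hxx x hx
    have h3 : (0:ℝ) < (n:ℝ)⁻¹ := by positivity
    have h4 : (0:ℝ) < τsq⁻¹ := by positivity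
    have h5 : (0:ℝ) < σsq⁻¹ := by positivity
    have hmi : ((n : ℝ) * σsq)⁻¹ = (n:ℝ)⁻¹ * σsq⁻¹ := by
      rw [mul_inv]
    rw [hmi]
    nlinarith [mul_le_mul_of_nonneg_left hkey (le_of_lt (mul_pos h3 h5)),
      mul_pos h3 (mul_pos h4 h2)]
  -- A ≠ 0
  have hAne : A ≠ 0 := by
    intro h0
    have h1 : γ ⬝ᵥ (A *ᵥ γ) = 0 := by rw [h0]; simp
    rw [hq, ← hD] at h1
    have : ((n : ℝ) * σsq)⁻¹ * ((D ⬝ᵥ D)⁻¹ * (D ⬝ᵥ D) ^ 2) > 0 := by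
      have h2 : (0:ℝ) < ((n : ℝ) * σsq)⁻¹ := by positivity
      have h3 : (0:ℝ) < (D ⬝ᵥ D)⁻¹ := by positivity
      positivity
    linarith [this, h1.symm.le]
  -- square root of B
  have hBpsd := hBpd.posSemidef
  set R := (psd_sqrt_exists hBpsd).choose with hR
  have hRpsd : R.PosSemidef := (psd_sqrt_exists hBpsd).choose_spec.1
  have hRherm : R.IsHermitian := hRpsd.isHermitian
  have hRR : R * R = B := (psd_sqrt_exists hBpsd).choose_spec.2
  have hdetR : IsUnit R.det := by
    have hdet : R.det * R.det = B.det := by rw [← det_mul, hRR]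
    have : R.det ≠ 0 := by
      intro h
      rw [h, mul_zero] at hdet
      exact (ne_of_gt hBpd.det_pos) hdet.symm
    exact isUnit_iff_ne_zero.mpr this
  have hRRinv : R * R⁻¹ = 1 := mul_nonsing_inv R hdetR
  have hRinvR : R⁻¹ * R = 1 := nonsing_inv_mul R hdetR
  have hRiherm : (R⁻¹).IsHermitian := hRherm.inv
  set S := R⁻¹ * A * R⁻¹ with hS
  have hSherm : S.IsHermitian := by
    rw [Matrix.IsHermitian, hS, conjTranspose_mul, conjTranspose_mul,
      hRiherm.eq, hAherm.eq, Matrix.mul_assoc]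
  have hSpsd : S.PosSemidef := by
    have := hApsd.conjTranspose_mul_mul_same (B := R⁻¹)
    rwa [hRiherm.eq] at this
  -- 1 - S is positive definite
  have hBinv : R⁻¹ * B * R⁻¹ = 1 := by
    rw [← hRR, ← Matrix.mul_assoc, Matrix.mul_assoc (R⁻¹ * R), hRinvR, hRRinv, one_mul]
  have hRit : (R⁻¹)ᵀ = R⁻¹ := by
    rw [← conjTranspose_eq_transpose_of_trivial]; exact hRiherm
  have hT : ∀ (x y : Fin J → ℝ), x ⬝ᵥ (R⁻¹ *ᵥ y) = (R⁻¹ *ᵥ x) ⬝ᵥ y := by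
    intro x y
    rw [dotProduct_mulVec]
    conv_lhs => rw [← hRit]
    rw [vecMul_transpose]
  have h1S : (1 : Matrix (Fin J) (Fin J) ℝ) - S = R⁻¹ * (B - A) * R⁻¹ := by
    rw [mul_sub, sub_mul, hBinv, hS]
  have h1Spd : ((1 : Matrix (Fin J) (Fin J) ℝ) - S).PosDef := by
    refine Matrix.PosDef.of_dotProduct_mulVec_pos (Matrix.isHermitian_one.sub hSherm) fun x hx => ?_
    rw [h1S, hstarJ]
    have hy : R⁻¹ *ᵥ x ≠ 0 := by
      intro h
      apply hx
      have : (R * R⁻¹) *ᵥ x = R *ᵥ (R⁻¹ *ᵥ x) := (mulVec_mulVec x R R⁻¹).symm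
      rw [hRRinv, one_mulVec, h, mulVec_zero] at this
      exact this
    have hq2 := hBA.dotProduct_mulVec_pos hy
    rw [hstarJ] at hq2
    rw [← mulVec_mulVec, ← mulVec_mulVec, hT]
    exact hq2
  -- similarity: A * B⁻¹ = R * S * R⁻¹
  have hRunit : IsUnit R := (Matrix.isUnit_iff_isUnit_det R).mpr hdetR
  have hABS : A * B⁻¹ = (hRunit.unit : Matrix (Fin J) (Fin J) ℝ) * S *
      ((hRunit.unit⁻¹ : (Matrix (Fin J) (Fin J) ℝ)ˣ) : Matrix (Fin J) (Fin J) ℝ) := by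
    rw [Matrix.coe_units_inv, hRunit.unit_spec, hS, ← hRR, Matrix.mul_inv_rev]
    simp only [Matrix.mul_assoc]
    rw [← Matrix.mul_assoc R R⁻¹, hRRinv, Matrix.one_mul]
  have hspecAB : spectrum ℝ (A * B⁻¹) = Set.range hSherm.eigenvalues := by
    rw [hABS, spectrum.units_conjugate]
    exact spectrum_eq_range hSherm
  -- c is an eigenvalue of S
  have hfin : (Set.range hSherm.eigenvalues).Finite := Set.finite_range _
  have hnonempty : (Set.range hSherm.eigenvalues).Nonempty := Set.range_nonempty _
  have hcmem : c ∈ Set.range hSherm.eigenvalues := by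
    rw [hc, lmax, hspecAB]
    exact hnonempty.csSup_mem hfin
  -- every eigenvalue is < 1
  have hlt1 : ∀ i, hSherm.eigenvalues i < 1 := by
    intro i
    have hv0 : ⇑(hSherm.eigenvectorBasis i) ≠ 0 := by
      intro h
      exact hSherm.eigenvectorBasis.orthonormal.ne_zero i (by ext j; exact congrFun h j)
    have hpos := h1Spd.dotProduct_mulVec_pos hv0
    rw [hstarJ, sub_mulVec, one_mulVec, hSherm.mulVec_eigenvectorBasis,
      dotProduct_sub, dotProduct_smul, smul_eq_mul] at hpos
    have hvv := hxx _ hv0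
    nlinarith
  -- some eigenvalue is positive
  have hSne : S ≠ 0 := by
    intro h0
    apply hAne
    have : R * S * R = A := by
      rw [hS]
      simp only [Matrix.mul_assoc]
      rw [hRinvR, Matrix.mul_one, ← Matrix.mul_assoc, hRRinv, Matrix.one_mul]
    rw [← this, h0, Matrix.mul_zero, Matrix.zero_mul]
  have heigne : hSherm.eigenvalues ≠ 0 := by
    intro h0
    apply hSne
    have hth := hSherm.spectral_theorem
    rw [h0] at hth
    rw [show (RCLike.ofReal ∘ (0 : Fin J → ℝ) : Fin J → ℝ) = fun _ => 0 by
      funext i; simp] at hth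
    rw [Matrix.diagonal_zero, map_zero] at hth
    exact hth
  obtain ⟨j, hj⟩ := Function.ne_iff.mp heigne
  have hjpos : 0 < hSherm.eigenvalues j :=
    lt_of_le_of_ne (hSpsd.eigenvalues_nonneg j) (Ne.symm hj)
  constructor
  · have hle : hSherm.eigenvalues j ≤ c := by
      rw [hc, lmax, hspecAB]
      exact le_csSup hfin.bddAbove (Set.mem_range_self j)
    linarith
  · obtain ⟨i, hi⟩ := hcmem
    rw [← hi]
    exact hlt1 i
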